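/- For positive integers n, n_i, q with q ≥ 2 and any string S of length n over an alphabet of size q, the number of strings obtainable from S by exactly n_i insertions equals the sum over i from 0 to n_i of (n+n_i choose i)·(q-1)^i; in particular this count is independent of S. -/

import Mathlib

open Finset

private def cnt (q m : ℕ) (L : List (Fin q)) : ℕ :=
  (Finset.univ.filter fun T : Fin m → Fin q => L.Sublist (List.ofFn T)).card

private lemma cnt_of_lt {q m : ℕ} {L : List (Fin q)} (h : m < L.length) : cnt q m L = 0 := by
  rw [cnt, Finset.card_eq_zero, Finset.filter_eq_empty_iff]
  intro T _ hT
  have := hT.length_le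
  simp [List.length_ofFn] at this
  omega

private lemma cnt_nil (q m : ℕ) : cnt q m ([] : List (Fin q)) = q ^ m := by
  simp [cnt, Finset.filter_true_of_mem (fun _ _ => List.nil_sublist _)]

private lemma step (q m : ℕ) (s : Fin q) (L : List (Fin q)) :
    cnt q (m+1) (s :: L) = (q-1) * cnt q m (s :: L) + cnt q m L := by
  have key : ∀ t : Fin q, ∀ f : Fin m → Fin q,
      (s :: L).Sublist (t :: List.ofFn f)
        ↔ (if t = s then L.Sublist (List.ofFn f) else (s :: L).Sublist (List.ofFn f)) := by
    intro t f
    split_ifs with h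
    · subst h; exact List.cons_sublist_cons
    · constructor
      · intro hsub
        cases hsub with
        | cons _ h' => exact h'
        | cons_cons _ h' => exact absurd rfl h
      · exact fun h' => h'.cons t
  have hofFn : ∀ (t : Fin q) (f : Fin m → Fin q),
      List.ofFn (Fin.cons t f : Fin (m+1) → Fin q) = t :: List.ofFn f := by
    intro t f
    rw [List.ofFn_succ]
    simp
  rw [cnt, Finset.card_filter]
  rw [← Fintype.sum_equiv (Fin.consEquiv fun _ : Fin (m+1) => Fin q)
      (fun p : Fin q × (Fin m → Fin q) => if (s :: L).Sublist (p.1 :: List.ofFn p.2) then 1 else 0)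
      (fun T => if (s :: L).Sublist (List.ofFn T) then 1 else 0)
      (fun p => by
        have : (Fin.consEquiv fun _ : Fin (m+1) => Fin q) p = Fin.cons p.1 p.2 := rfl
        rw [this]; simp only [hofFn])]
  rw [Fintype.sum_prod_type]
  have inner : ∀ t : Fin q,
      (∑ f : Fin m → Fin q, if (s :: L).Sublist (t :: List.ofFn f) then 1 else 0)
        = if t = s then cnt q m L else cnt q m (s :: L) := by
    intro t
    simp only [key]
    split_ifs with h
    · rw [cnt, Finset.card_filter]
    · rw [cnt, Finset.card_filter]
  rw [Finset.sum_congr rfl (fun t _ => inner t)]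
  rw [Finset.sum_ite]
  simp only [Finset.sum_const, smul_eq_mul]
  have h1 : (Finset.univ.filter (fun t : Fin q => t = s)).card = 1 := by
    simp [Finset.filter_eq']
  have h2 : (Finset.univ.filter (fun t : Fin q => ¬ t = s)).card = q - 1 := by
    rw [Finset.filter_not, Finset.card_sdiff_of_subset (Finset.filter_subset _ _)]
    simp [Finset.filter_eq']
  rw [h1, h2]
  ring

private lemma bin (x m : ℕ) : ∀ k,
    x * ∑ i ∈ range k, m.choose i * x ^ i + ∑ i ∈ range (k+1), m.choose i * x ^ i
      = ∑ i ∈ range (k+1), (m+1).choose i * x ^ i := by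
  intro k
  induction k with
  | zero => simp
  | succ k ih =>
    rw [Finset.sum_range_succ (fun i => m.choose i * x ^ i) k,
        Finset.sum_range_succ (fun i => m.choose i * x ^ i) (k+1),
        Finset.sum_range_succ (fun i => (m+1).choose i * x ^ i) (k+1)]
    rw [Nat.choose_succ_succ (m) (k), mul_add, ← ih]
    ring

private lemma qpow (q m : ℕ) (hq : 1 ≤ q) :
    q ^ m = ∑ i ∈ range (m + 1), m.choose i * (q-1) ^ i := by
  have h : q = (q - 1) + 1 := by omega
  calc q ^ m = ((q-1) + 1) ^ m := by rw [← h]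
    _ = ∑ i ∈ range (m + 1), (q-1) ^ i * 1 ^ (m - i) * m.choose i := add_pow _ _ _
    _ = ∑ i ∈ range (m + 1), m.choose i * (q-1) ^ i := by
        apply Finset.sum_congr rfl; intro i _; ring

private lemma cnt_eq (q : ℕ) (hq : 1 ≤ q) :
    ∀ (m : ℕ) (L : List (Fin q)), L.length ≤ m →
      cnt q m L = ∑ i ∈ range (m - L.length + 1), m.choose i * (q-1) ^ i := by
  intro m
  induction m with
  | zero =>
    intro L hL
    have : L = [] := List.length_eq_zero_iff.mp (Nat.le_zero.mp hL)
    subst this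
    simpa using cnt_nil q 0
  | succ m ih =>
    intro L hL
    cases L with
    | nil =>
      simpa using (cnt_nil q (m+1)).trans (qpow q (m+1) hq)
    | cons s L' =>
      rw [step]
      rcases Nat.lt_or_ge L'.length m with hlt | hge
      · -- L'.length + 1 ≤ m
        have h1 := ih (s :: L') (by simpa using hlt)
        have h2 := ih L' (le_of_lt hlt)
        rw [h1, h2]
        have hk : m - L'.length = (m - (s :: L').length) + 1 := by
          simp only [List.length_cons]; omega
        have hk2 : (m + 1) - (s :: L').length = (m - (s :: L').length) + 1 := by
          simp only [List.length_cons]; omega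
        rw [hk, hk2]
        exact bin (q-1) m (m - (s :: L').length + 1)
      · -- boundary: L'.length = m (since length ≤ m+1)
        have hEq : L'.length = m := by simp only [List.length_cons] at hL; omega
        have h0 : cnt q m (s :: L') = 0 := cnt_of_lt (by simp [hEq])
        have h2 := ih L' (le_of_eq hEq)
        rw [h0, h2]
        simp [hEq]


/-- Levenshtein's formula: the number of strings of length `n + ni` over an alphabet of
size `q` that contain a fixed string `S` of length `n` as a subsequence (i.e. the size of
the insertion ball of radius `ni` around `S`) equals `∑_{i=0}^{ni} C(n+ni, i) (q-1)^i`,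
independently of `S`. -/
theorem insertion_ball_size (n ni q : ℕ) (hn : 0 < n) (hni : 0 < ni) (hq : 2 ≤ q)
    (S : List (Fin q)) (hS : S.length = n) :
    (Finset.univ.filter
        (fun T : Fin (n + ni) → Fin q => S.Sublist (List.ofFn T))).card
      = ∑ i ∈ Finset.range (ni + 1), (n + ni).choose i * (q - 1) ^ i := by
  have h := cnt_eq q (by omega) (n + ni) S (by omega)
  rw [cnt] at h
  rw [h, hS]
  have hnn : n + ni - n = ni := by omega
  rw [hnn]
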